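/- arXiv:1402.3341 — 2 statements merged into one kernel-verified Lean document; each statement's English description precedes it below -/
import Mathlib

section
/- Let q be a prime power and 1 ≤ m ≤ q − 1. Then the second largest eigenvalue of the adjacency matrix of the Wenger graph W_m(q) equals √(m·q). In particular, the second largest eigenvalue is at most 2√q if and only if m ≤ 4. -/
open Finset

/-- Adjacency relation of the Wenger graph `W_m(q)`: a point `p = (p_1, …, p_{m+1})`
(0-indexed here) is adjacent to a line `l = (l_1, …, l_{m+1})` iff
`l_{i+1} + p_{i+1} = l_i * p_1` for `i = 1, …, m`. -/
def wengerAdj {F : Type*} [Field F] {m : ℕ} (p l : Fin (m + 1) → F) : Prop :=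
  ∀ i : Fin m, l i.succ + p i.succ = l i.castSucc * p 0

/-- The Wenger graph `W_m(q)` as a simple graph on `P ⊕ L`, where both `P` (points, `inl`)
and `L` (lines, `inr`) are copies of `F^{m+1}` for a finite field `F` with `q` elements. -/
def WengerGraph (F : Type*) [Field F] (m : ℕ) :
    SimpleGraph ((Fin (m + 1) → F) ⊕ (Fin (m + 1) → F)) where
  Adj x y :=
    match x, y with
    | Sum.inl p, Sum.inr l => wengerAdj p l
    | Sum.inr l, Sum.inl p => wengerAdj p l
    | _, _ => False
  symm := ⟨by rintro (p | l) (p' | l') h <;> exact h⟩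
  loopless := ⟨by rintro (p | l) h <;> exact h⟩

open scoped Classical in
/-- The (real) adjacency matrix of the Wenger graph `W_m(q)`. -/
noncomputable def wengerAdjMatrix (F : Type*) [Field F] (m : ℕ) :
    Matrix ((Fin (m + 1) → F) ⊕ (Fin (m + 1) → F)) ((Fin (m + 1) → F) ⊕ (Fin (m + 1) → F)) ℝ :=
  (WengerGraph F m).adjMatrix ℝ

open Matrix Polynomial

namespace Wenger

section Core
variable {F : Type*} [Field F] {m : ℕ}


variable {F : Type*} [Field F] {m : ℕ}

/-- The `u`-coordinates of a point. -/
def Upt (p : Fin (m + 1) → F) : ℕ → F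
  | 0 => 0
  | k + 1 => Upt p k * p 0 + (if h : k + 1 < m + 1 then p ⟨k + 1, h⟩ else 0)

lemma Upt_succ (p : Fin (m + 1) → F) (i : Fin m) :
    Upt p ((i : ℕ) + 1) = Upt p (i : ℕ) * p 0 + p i.succ := by
  have h : (i : ℕ) + 1 < m + 1 := by omega
  simp [Upt, h, Fin.succ]

lemma adj_iff {p l : Fin (m + 1) → F} :
    wengerAdj p l ↔ ∀ k : Fin (m + 1), l k = l 0 * (p 0) ^ (k : ℕ) - Upt p (k : ℕ) := by
  constructor
  · intro h k
    induction k using Fin.induction with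
    | zero => simp [Upt]
    | succ i ih =>
      have hi := h i
      have h1 : ((i.succ : Fin (m+1)) : ℕ) = (i : ℕ) + 1 := rfl
      have h2 : ((i.castSucc : Fin (m+1)) : ℕ) = (i : ℕ) := rfl
      rw [h1, Upt_succ]
      rw [h2] at ih
      have : l i.succ = l i.castSucc * p 0 - p i.succ := by linear_combination hi
      rw [this, ih]
      ring
  · intro h i
    have h1 := h i.succ
    have h2 := h i.castSucc
    have e1 : ((i.succ : Fin (m+1)) : ℕ) = (i : ℕ) + 1 := rfl
    have e2 : ((i.castSucc : Fin (m+1)) : ℕ) = (i : ℕ) := rfl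
    rw [e1, Upt_succ] at h1
    rw [e2] at h2
    rw [h1, h2]
    ring

/-- The line through `p` with first coordinate `y`. -/
def lineThrough (p : Fin (m + 1) → F) (y : F) : Fin (m + 1) → F :=
  fun k => y * (p 0) ^ (k : ℕ) - Upt p (k : ℕ)

@[simp] lemma lineThrough_zero (p : Fin (m + 1) → F) (y : F) : lineThrough p y 0 = y := by
  simp [lineThrough, Upt]

lemma adj_lineThrough (p : Fin (m + 1) → F) (y : F) : wengerAdj p (lineThrough p y) := by
  rw [adj_iff]
  intro k
  rw [lineThrough_zero]
  rfl

lemma eq_lineThrough {p l : Fin (m + 1) → F} (h : wengerAdj p l) : l = lineThrough p (l 0) :=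
  funext (adj_iff.1 h)

/-- The point on line `l` with first coordinate `x`. -/
def pointOn (l : Fin (m + 1) → F) (x : F) : Fin (m + 1) → F :=
  Fin.cases x (fun k => l k.castSucc * x - l k.succ)

@[simp] lemma pointOn_zero (l : Fin (m + 1) → F) (x : F) : pointOn l x 0 = x := rfl

lemma adj_pointOn (l : Fin (m + 1) → F) (x : F) : wengerAdj (pointOn l x) l := by
  intro i
  simp [pointOn]

lemma eq_pointOn {p l : Fin (m + 1) → F} (h : wengerAdj p l) : p = pointOn l (p 0) := by
  funext k
  induction k using Fin.cases with
  | zero => rfl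
  | succ i =>
    have := h i
    simp only [pointOn, Fin.cases_succ]
    linear_combination this

/-- Key identity: `u`-coordinates of a two-step neighbour. -/
lemma Upt_pointOn_lineThrough (p : Fin (m + 1) → F) (y x : F) (k : Fin (m + 1)) :
    Upt (pointOn (lineThrough p y) x) (k : ℕ)
      = Upt p (k : ℕ) + y * (x ^ (k : ℕ) - (p 0) ^ (k : ℕ)) := by
  have h1 := adj_iff.1 (adj_pointOn (lineThrough p y) x) k
  have h2 : lineThrough p y k = y * (p 0) ^ (k : ℕ) - Upt p (k : ℕ) := rfl
  rw [pointOn_zero, lineThrough_zero] at h1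
  linear_combination h1 - h2


end Core

section Mat
variable {F : Type*} [Field F] {m : ℕ}

variable [Fintype F]

open scoped Classical in
/-- The bipartite "biadjacency" matrix of the Wenger graph, over a coefficient ring `K`. -/
noncomputable def Bmat (F : Type*) [Field F] [Fintype F] (m : ℕ) (K : Type*) [CommRing K] :
    Matrix (Fin (m+1) → F) (Fin (m+1) → F) K :=
  Matrix.of fun p l => if wengerAdj p l then 1 else 0

noncomputable def Cmat (F : Type*) [Field F] [Fintype F] (m : ℕ) (K : Type*) [CommRing K] :
    Matrix (Fin (m+1) → F) (Fin (m+1) → F) K :=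
  Bmat F m K * (Bmat F m K)ᵀ

variable {K : Type*} [Field K]

lemma lineThrough_injective (p : Fin (m+1) → F) : Function.Injective (lineThrough p) := by
  intro y y' h
  rw [← lineThrough_zero p y, ← lineThrough_zero p y', h]

lemma pointOn_injective (l : Fin (m+1) → F) : Function.Injective (pointOn l) := by
  intro x x' h
  rw [← pointOn_zero l x, ← pointOn_zero l x', h]

open scoped Classical in
lemma sum_lines (p : Fin (m+1) → F) (h : (Fin (m+1) → F) → K) :
    ∑ l : Fin (m+1) → F, (if wengerAdj p l then h l else 0) = ∑ y : F, h (lineThrough p y) := by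
  rw [← Finset.sum_filter]
  have himg : univ.filter (fun l => wengerAdj p l) = univ.image (lineThrough p) := by
    ext l
    simp only [mem_filter, mem_univ, true_and, mem_image]
    constructor
    · intro hl; exact ⟨l 0, (eq_lineThrough hl).symm⟩
    · rintro ⟨y, rfl⟩; exact adj_lineThrough p y
  rw [himg, Finset.sum_image (fun a _ b _ hab => lineThrough_injective p hab)]

open scoped Classical in
lemma sum_points (l : Fin (m+1) → F) (h : (Fin (m+1) → F) → K) :
    ∑ p : Fin (m+1) → F, (if wengerAdj p l then h p else 0) = ∑ x : F, h (pointOn l x) := by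
  rw [← Finset.sum_filter]
  have himg : univ.filter (fun p => wengerAdj p l) = univ.image (pointOn l) := by
    ext p
    simp only [mem_filter, mem_univ, true_and, mem_image]
    constructor
    · intro hp; exact ⟨p 0, (eq_pointOn hp).symm⟩
    · rintro ⟨x, rfl⟩; exact adj_pointOn l x
  rw [himg, Finset.sum_image (fun a _ b _ hab => pointOn_injective l hab)]

lemma Cmat_mulVec (w : (Fin (m+1) → F) → K) (p : Fin (m+1) → F) :
    (Cmat F m K).mulVec w p = ∑ y : F, ∑ x : F, w (pointOn (lineThrough p y) x) := by
  classical
  rw [Cmat, ← Matrix.mulVec_mulVec]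
  have hBt : ∀ l, ((Bmat F m K)ᵀ.mulVec w) l = ∑ x : F, w (pointOn l x) := by
    intro l
    rw [Matrix.mulVec, dotProduct]
    rw [← sum_points l w]
    apply Finset.sum_congr rfl
    intro p' _
    simp [Bmat, Matrix.transpose_apply, ite_mul]
  rw [Matrix.mulVec, dotProduct]
  rw [← sum_lines p (fun l => ∑ x : F, w (pointOn l x))]
  apply Finset.sum_congr rfl
  intro l _
  rw [hBt l]
  simp [Bmat, ite_mul]

lemma Upt_zero (p : Fin (m + 1) → F) : Upt p 0 = 0 := rfl

-- character test vectors
def fpoly (t : Fin m → F) (z : F) : F := ∑ i : Fin m, t i * z ^ ((i : ℕ) + 1)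

def Tchar (t : Fin m → F) (p : Fin (m+1) → F) : F := ∑ i : Fin m, t i * Upt p ((i : ℕ) + 1)

noncomputable def testVec (ψ : AddChar F K) (t : Fin m → F) (g : F → K) :
    (Fin (m+1) → F) → K := fun p => g (p 0) * ψ (Tchar t p)

lemma fpoly_def (t : Fin m → F) (z : F) :
    fpoly t z = ∑ i : Fin m, t i * z ^ ((i : ℕ) + 1) := rfl

lemma Tchar_pointOn_lineThrough (t : Fin m → F) (p : Fin (m+1) → F) (y x : F) :
    Tchar t (pointOn (lineThrough p y) x)
      = Tchar t p + y * (fpoly t x - fpoly t (p 0)) := by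
  unfold Tchar fpoly
  have key : ∀ i : Fin m, Upt (pointOn (lineThrough p y) x) ((i : ℕ) + 1)
      = Upt p ((i : ℕ) + 1) + y * (x ^ ((i : ℕ) + 1) - (p 0) ^ ((i : ℕ) + 1)) := by
    intro i
    have := Upt_pointOn_lineThrough p y x i.succ
    simpa using this
  calc ∑ i : Fin m, t i * Upt (pointOn (lineThrough p y) x) ((i : ℕ) + 1)
      = ∑ i : Fin m, (t i * Upt p ((i : ℕ) + 1)
          + (y * (t i * x ^ ((i : ℕ) + 1)) - y * (t i * (p 0) ^ ((i : ℕ) + 1)))) := by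
        apply Finset.sum_congr rfl
        intro i _
        rw [key i]; ring
    _ = _ := by
        rw [Finset.sum_add_distrib, Finset.sum_sub_distrib, ← Finset.mul_sum, ← Finset.mul_sum]
        ring

open scoped Classical in
lemma key_action (ψ : AddChar F K) (hψ : ψ.IsPrimitive) (t : Fin m → F) (g : F → K) :
    (Cmat F m K).mulVec (testVec ψ t g)
      = testVec ψ t (fun X => (Fintype.card F : K) *
          ∑ x ∈ univ.filter (fun x => fpoly t x = fpoly t X), g x) := by
  funext p
  rw [Cmat_mulVec]
  have step1 : ∀ y x : F, testVec ψ t g (pointOn (lineThrough p y) x)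
      = g x * (ψ (Tchar t p) * ψ (y * (fpoly t x - fpoly t (p 0)))) := by
    intro y x
    unfold testVec
    rw [pointOn_zero, Tchar_pointOn_lineThrough, AddChar.map_add_eq_mul]
  simp only [step1]
  rw [Finset.sum_comm]
  have step2 : ∀ x : F, ∑ y : F, g x * (ψ (Tchar t p) * ψ (y * (fpoly t x - fpoly t (p 0))))
      = g x * ψ (Tchar t p) * (if fpoly t x = fpoly t (p 0) then (Fintype.card F : K) else 0) := by
    intro x
    rw [← Finset.mul_sum, ← Finset.mul_sum, ← mul_assoc]
    congr 1
    have := AddChar.sum_mulShift (ψ := ψ) (fpoly t x - fpoly t (p 0)) hψ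
    rw [this]
    simp [sub_eq_zero]
  simp only [step2]
  unfold testVec
  simp only
  rw [Finset.mul_sum, Finset.sum_filter, Finset.sum_mul]
  apply Finset.sum_congr rfl
  intro x _
  split <;> ring



open scoped Classical in
noncomputable def fib (t : Fin m → F) (a : F) : Finset F :=
  univ.filter (fun x => fpoly t x = fpoly t a)

open scoped Classical in
lemma fib_card_pos (t : Fin m → F) (a : F) : 0 < (fib t a).card := by
  apply Finset.card_pos.2
  exact ⟨a, by simp [fib]⟩

open scoped Classical in
lemma fib_card_le (t : Fin m → F) (a : F) (ht : t ≠ 0) : (fib t a).card ≤ m := by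
  set Q : Polynomial F := (∑ i : Fin m, C (t i) * X ^ ((i : ℕ) + 1)) - C (fpoly t a) with hQ
  obtain ⟨i0, hi0⟩ : ∃ i, t i ≠ 0 := by
    by_contra h
    push_neg at h
    exact ht (funext h)
  have hQcoeff : Q.coeff ((i0 : ℕ) + 1) = t i0 := by
    rw [hQ, Polynomial.coeff_sub, Polynomial.finset_sum_coeff]
    have : ∀ i : Fin m, (C (t i) * X ^ ((i : ℕ) + 1)).coeff ((i0 : ℕ) + 1)
        = if i = i0 then t i else 0 := by
      intro i
      rw [Polynomial.coeff_C_mul, Polynomial.coeff_X_pow]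
      by_cases h : i = i0
      · simp [h]
      · have h1 : ¬((i : ℕ) + 1 = (i0 : ℕ) + 1) := fun hc => h (Fin.ext (by omega))
        have h2 : ¬((i0 : ℕ) + 1 = (i : ℕ) + 1) := fun hc => h (Fin.ext (by omega))
        simp [h, h1, h2]
        intro hc
        exact absurd (Fin.ext hc.symm) h
    rw [Finset.sum_congr rfl (fun i _ => this i), Finset.sum_ite_eq' univ i0]
    simp
  have hQne : Q ≠ 0 := fun h => hi0 (by rw [h] at hQcoeff; simpa using hQcoeff.symm)
  have hdeg : Q.natDegree ≤ m := by
    rw [hQ]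
    apply le_trans (Polynomial.natDegree_sub_le _ _)
    apply max_le
    · apply le_trans (Polynomial.natDegree_sum_le _ _)
      refine (Finset.fold_max_le _).mpr ⟨Nat.zero_le m, ?_⟩
      intro i _
      apply le_trans (Polynomial.natDegree_C_mul_le _ _)
      simp only [Function.comp, Polynomial.natDegree_X_pow]
      omega
    · simp
  have heval : ∀ x : F, Q.eval x = fpoly t x - fpoly t a := by
    intro x
    rw [hQ]
    simp only [Polynomial.eval_sub, Polynomial.eval_finset_sum, Polynomial.eval_mul,
      Polynomial.eval_C, Polynomial.eval_pow, Polynomial.eval_X]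
    rw [fpoly_def, fpoly_def]
  have hsub : fib t a ⊆ Q.roots.toFinset := by
    intro x hx
    simp only [fib, mem_filter, mem_univ, true_and] at hx
    rw [Multiset.mem_toFinset, Polynomial.mem_roots hQne]
    unfold Polynomial.IsRoot
    rw [heval x, hx, sub_self]
  calc (fib t a).card ≤ Q.roots.toFinset.card := Finset.card_le_card hsub
    _ ≤ Multiset.card Q.roots := Multiset.toFinset_card_le _
    _ ≤ Q.natDegree := Polynomial.card_roots' Q
    _ ≤ m := hdeg

open scoped Classical in
lemma fib_card_zero (a : F) : (fib (0 : Fin m → F) a).card = Fintype.card F := by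
  have : fib (0 : Fin m → F) a = univ := by
    ext x
    simp [fib, fpoly_def]
  rw [this, Finset.card_univ]

open scoped Classical in
lemma act_delta (ψ : AddChar F K) (hψ : ψ.IsPrimitive) (t : Fin m → F) (a : F) :
    (Cmat F m K).mulVec (testVec ψ t (fun x => if x = a then 1 else 0))
      = testVec ψ t (fun X => if fpoly t a = fpoly t X then (Fintype.card F : K) else 0) := by
  rw [key_action ψ hψ]
  funext p
  unfold testVec
  congr 1
  simp only
  rw [Finset.sum_ite_eq' _ a (fun _ => (1:K))]
  simp only [mem_filter, mem_univ, true_and]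
  split <;> simp

open scoped Classical in
lemma act_fibind (ψ : AddChar F K) (hψ : ψ.IsPrimitive) (t : Fin m → F) (a : F) :
    (Cmat F m K).mulVec (testVec ψ t
        (fun X => if fpoly t a = fpoly t X then (Fintype.card F : K) else 0))
      = ((Fintype.card F : K) * ((fib t a).card : K)) •
          testVec ψ t (fun X => if fpoly t a = fpoly t X then (Fintype.card F : K) else 0) := by
  rw [key_action ψ hψ]
  have : (fun X => (Fintype.card F : K) *
      ∑ x ∈ univ.filter (fun x => fpoly t x = fpoly t X),
        (if fpoly t a = fpoly t x then (Fintype.card F : K) else 0))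
      = fun X => ((Fintype.card F : K) * ((fib t a).card : K)) *
          (if fpoly t a = fpoly t X then (Fintype.card F : K) else 0) := by
    funext X
    by_cases hX : fpoly t a = fpoly t X
    · have hfe : univ.filter (fun x => fpoly t x = fpoly t X) = fib t a := by
        unfold fib
        apply Finset.filter_congr
        intro x _
        rw [← hX]
      rw [hfe]
      have hconst : ∀ x ∈ fib t a, (if fpoly t a = fpoly t x then (Fintype.card F : K) else 0)
          = (Fintype.card F : K) := by
        intro x hx
        simp only [fib, mem_filter, mem_univ, true_and] at hx
        rw [if_pos hx.symm]
      rw [Finset.sum_congr rfl hconst, Finset.sum_const, nsmul_eq_mul, if_pos hX]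
      ring
    · rw [if_neg hX, mul_zero]
      have : ∀ x ∈ univ.filter (fun x => fpoly t x = fpoly t X),
          (if fpoly t a = fpoly t x then (Fintype.card F : K) else 0) = 0 := by
        intro x hx
        simp only [mem_filter, mem_univ, true_and] at hx
        rw [if_neg (fun hc => hX (hc.trans hx))]
      rw [Finset.sum_congr rfl this, Finset.sum_const_zero, mul_zero]
  rw [this]
  funext p
  simp only [testVec, Pi.smul_apply, smul_eq_mul]
  ring
  
-- generic annihilation
lemma annihilate {n : Type*} [Fintype n] [DecidableEq n] (M : Matrix n n K) (w : n → K) (c : K)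
    (h : M.mulVec (M.mulVec w) = c • M.mulVec w) (S : Polynomial K) :
    (Polynomial.aeval M (S * (X - C c) * X)).mulVec w = 0 := by
  rw [_root_.map_mul, _root_.map_mul, Polynomial.aeval_X, map_sub, Polynomial.aeval_X, Polynomial.aeval_C,
    Algebra.algebraMap_eq_smul_one]
  rw [← Matrix.mulVec_mulVec, ← Matrix.mulVec_mulVec]
  rw [Matrix.sub_mulVec, Matrix.smul_mulVec, Matrix.one_mulVec, h]
  simp



lemma addchar_map_sum {ι : Type*} (ψ : AddChar F K) (s : Finset ι) (f : ι → F) :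
    ψ (∑ i ∈ s, f i) = ∏ i ∈ s, ψ (f i) := by
  classical
  induction s using Finset.induction with
  | empty => simp
  | insert _ _ h ih => rw [Finset.sum_insert h, Finset.prod_insert h, AddChar.map_add_eq_mul, ih]

open scoped Classical in
lemma char_sum_vec (ψ : AddChar F K) (hψ : ψ.IsPrimitive) (w : Fin m → F) :
    ∑ t : Fin m → F, ψ (∑ i : Fin m, t i * w i)
      = if w = 0 then ((Fintype.card F : K) ^ m) else 0 := by
  have h1 : ∀ t : Fin m → F, ψ (∑ i : Fin m, t i * w i) = ∏ i : Fin m, ψ (t i * w i) :=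
    fun t => addchar_map_sum ψ univ _
  simp only [h1]
  rw [← Fintype.piFinset_univ, ← Finset.prod_univ_sum (fun _ => univ) (fun i j => ψ (j * w i))]
  have h2 : ∀ i : Fin m, ∑ j : F, ψ (j * w i) = if w i = 0 then (Fintype.card F : K) else 0 := by
    intro i
    rw [AddChar.sum_mulShift _ hψ]
    split <;> simp
  rw [Finset.prod_congr rfl (fun i _ => h2 i)]
  by_cases hw : w = 0
  · simp [hw, Finset.prod_const, Finset.card_univ]
  · obtain ⟨i0, hi0⟩ : ∃ i, w i ≠ 0 := by
      by_contra h; push_neg at h; exact hw (funext h)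
    rw [if_neg hw]
    exact Finset.prod_eq_zero (mem_univ i0) (by rw [if_neg hi0])

lemma point_ext {p p0 : Fin (m+1) → F} (h0 : p 0 = p0 0)
    (hU : ∀ i : Fin m, Upt p ((i : ℕ) + 1) = Upt p0 ((i : ℕ) + 1)) : p = p0 := by
  funext k
  induction k using Fin.cases with
  | zero => exact h0
  | succ i =>
    have e1 := Upt_succ p i
    have e2 := Upt_succ p0 i
    have hk : Upt p (i : ℕ) = Upt p0 (i : ℕ) := by
      rcases Nat.eq_zero_or_pos (i : ℕ) with h | h
      · rw [h, Upt_zero, Upt_zero]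
      · obtain ⟨j, hj⟩ := Nat.exists_eq_succ_of_ne_zero (Nat.pos_iff_ne_zero.1 h)
        have hjm : j < m := by omega
        have := hU ⟨j, hjm⟩
        simpa [hj] using this
    have := hU i
    rw [e1, e2, hk, h0] at this
    linear_combination this

open scoped Classical in
lemma delta_decomp (ψ : AddChar F K) (hψ : ψ.IsPrimitive) (p0 : Fin (m+1) → F) :
    ∑ t : Fin m → F, ψ (- Tchar t p0) • testVec ψ t (fun x => if x = p0 0 then 1 else 0)
      = ((Fintype.card F : K) ^ m) • (Pi.single p0 (1 : K) : (Fin (m+1) → F) → K) := by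
  funext p
  simp only [Finset.sum_apply, Pi.smul_apply, smul_eq_mul, testVec, Pi.single_apply]
  by_cases h0 : p 0 = p0 0
  · have hterm : ∀ t : Fin m → F,
        ψ (- Tchar t p0) * ((if p 0 = p0 0 then (1:K) else 0) * ψ (Tchar t p))
        = ψ (∑ i : Fin m, t i * (Upt p ((i:ℕ)+1) - Upt p0 ((i:ℕ)+1))) := by
      intro t
      rw [if_pos h0, one_mul, ← AddChar.map_add_eq_mul]
      congr 1
      unfold Tchar
      simp only [mul_sub]
      rw [Finset.sum_sub_distrib]
      ring
    rw [Finset.sum_congr rfl (fun t _ => hterm t)]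
    rw [char_sum_vec ψ hψ]
    by_cases hp : p = p0
    · rw [if_pos (by funext i; simp [hp]), if_pos hp, mul_one]
    · rw [if_neg, if_neg hp, mul_zero]
      intro hc
      apply hp
      apply point_ext h0
      intro i
      have := congrFun hc i
      simp only [Pi.zero_apply] at this
      linear_combination this
  · have : ∀ t : Fin m → F,
        ψ (- Tchar t p0) * ((if p 0 = p0 0 then (1:K) else 0) * ψ (Tchar t p)) = 0 := by
      intro t; rw [if_neg h0]; ring
    rw [Finset.sum_congr rfl (fun t _ => this t), Finset.sum_const_zero]
    rw [if_neg (fun hc : p = p0 => h0 (by rw [hc])), mul_zero]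

/-- The annihilating polynomial. -/
noncomputable def Ppoly (q m : ℕ) (K : Type*) [CommRing K] : Polynomial K :=
  X * (X - C ((q:K) * (q:K))) * ∏ k ∈ range m, (X - C ((q:K) * ((k:K)+1)))

open scoped Classical in
theorem aeval_Cmat_Ppoly (ψ : AddChar F K) (hψ : ψ.IsPrimitive)
    (hq0 : (Fintype.card F : K) ≠ 0) :
    Polynomial.aeval (Cmat F m K) (Ppoly (Fintype.card F) m K) = 0 := by
  set q := Fintype.card F with hqdef
  set M := Polynomial.aeval (Cmat F m K) (Ppoly q m K) with hM
  -- columns vanish on test vectors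
  have hvanish : ∀ (t : Fin m → F) (a : F),
      M.mulVec (testVec ψ t (fun x => if x = a then 1 else 0)) = 0 := by
    intro t a
    set s := (fib t a).card with hs
    have hrel : (Cmat F m K).mulVec ((Cmat F m K).mulVec
        (testVec ψ t (fun x => if x = a then 1 else 0)))
        = ((q:K) * (s:K)) • (Cmat F m K).mulVec
            (testVec ψ t (fun x => if x = a then 1 else 0)) := by
      rw [act_delta ψ hψ t a, act_fibind ψ hψ t a]
    obtain ⟨S, hS⟩ : ∃ S : Polynomial K,
        Ppoly q m K = S * (X - C ((q:K) * (s:K))) * X := by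
      by_cases ht : t = 0
      · refine ⟨∏ k ∈ range m, (X - C ((q:K) * ((k:K)+1))), ?_⟩
        have : (s : K) = (q : K) := by rw [hs, ht, fib_card_zero]
        rw [Ppoly, this]
        ring
      · have h1 : 1 ≤ s := fib_card_pos t a
        have h2 : s ≤ m := fib_card_le t a ht
        have hmem : s - 1 ∈ range m := by rw [mem_range]; omega
        refine ⟨(X - C ((q:K) * (q:K))) * ∏ k ∈ (range m).erase (s-1),
          (X - C ((q:K) * ((k:K)+1))), ?_⟩
        rw [Ppoly, ← Finset.mul_prod_erase (range m) _ hmem]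
        have hcast : (((s-1 : ℕ)):K) + 1 = (s:K) := by
          have : ((s - 1 : ℕ) : K) = (s : K) - 1 := by
            push_cast [h1]; ring
          rw [this]; ring
        rw [hcast]
        ring
    rw [hM, hS, annihilate _ _ _ hrel S]
  have hcol : ∀ p0 : Fin (m+1) → F, M.mulVec (Pi.single p0 (1:K)) = 0 := by
    intro p0
    have hdec := delta_decomp ψ hψ p0
    have : M.mulVec (((q:K) ^ m) • (Pi.single p0 (1:K) : (Fin (m+1) → F) → K)) = 0 := by
      rw [← hdec, ← Matrix.mulVecLin_apply, map_sum]
      apply Finset.sum_eq_zero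
      intro t _
      rw [_root_.map_smul, Matrix.mulVecLin_apply, hvanish t (p0 0), smul_zero]
    rw [Matrix.mulVec_smul] at this
    have hpow : ((q:K) ^ m) ≠ 0 := pow_ne_zero _ hq0
    exact (smul_eq_zero.1 this).resolve_left hpow
  ext i j
  have := congrFun (hcol j) i
  rw [Matrix.mulVec_single] at this
  simpa using this


end Mat

section Generic


-- generic matrix lemmas
variable {n : Type*} [Fintype n] [DecidableEq n]

/-- aeval on a block-diagonal matrix. -/
lemma aeval_fromBlocks {R : Type*} [CommRing R] {n' : Type*} [Fintype n'] [DecidableEq n']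
    (M : Matrix n n R) (N : Matrix n' n' R) (p : Polynomial R) :
    Polynomial.aeval (Matrix.fromBlocks M 0 0 N) p
      = Matrix.fromBlocks (Polynomial.aeval M p) 0 0 (Polynomial.aeval N p) := by
  have hpow : ∀ k : ℕ, (Matrix.fromBlocks M 0 0 N) ^ k
      = Matrix.fromBlocks (M ^ k) 0 0 (N ^ k) := by
    intro k
    induction k with
    | zero => simp [Matrix.fromBlocks_one]
    | succ k ih =>
      rw [pow_succ, pow_succ, pow_succ, ih, Matrix.fromBlocks_multiply]
      simp
  induction p using Polynomial.induction_on' with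
  | add p q hp hq => rw [map_add, map_add, map_add, hp, hq, Matrix.fromBlocks_add]; simp
  | monomial k a =>
    rw [Polynomial.aeval_monomial, Polynomial.aeval_monomial, Polynomial.aeval_monomial]
    rw [hpow, Algebra.algebraMap_eq_smul_one, Algebra.algebraMap_eq_smul_one,
      Algebra.algebraMap_eq_smul_one]
    rw [← Matrix.fromBlocks_one, Matrix.fromBlocks_smul, Matrix.fromBlocks_multiply]
    simp

lemma pow_mulVec_eigen {R : Type*} [CommRing R] (M : Matrix n n R) (v : n → R) (μ : R)
    (h : M.mulVec v = μ • v) (k : ℕ) : (M ^ k).mulVec v = (μ ^ k) • v := by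
  induction k with
  | zero => simp [Matrix.one_mulVec]
  | succ k ih =>
    rw [pow_succ, ← Matrix.mulVec_mulVec, h, Matrix.mulVec_smul, ih, smul_smul, pow_succ,
      mul_comm]

lemma aeval_mulVec_eigen {R : Type*} [CommRing R] (M : Matrix n n R) (v : n → R) (μ : R)
    (h : M.mulVec v = μ • v) (p : Polynomial R) :
    (Polynomial.aeval M p).mulVec v = (p.eval μ) • v := by
  induction p using Polynomial.induction_on' with
  | add p q hp hq => rw [map_add, Matrix.add_mulVec, hp, hq, Polynomial.eval_add, add_smul]
  | monomial k a =>
    rw [Polynomial.aeval_monomial, Algebra.algebraMap_eq_smul_one]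
    rw [Matrix.smul_mul, Matrix.one_mul, Matrix.smul_mulVec, pow_mulVec_eigen M v μ h k]
    rw [Polynomial.eval_monomial, smul_smul]

lemma comm_mulB {R : Type*} [CommRing R] (B : Matrix n n R) (p : Polynomial R) :
    B * Polynomial.aeval (Bᵀ * B) p = Polynomial.aeval (B * Bᵀ) p * B := by
  have hpow : ∀ k : ℕ, B * (Bᵀ * B) ^ k = (B * Bᵀ) ^ k * B := by
    intro k
    induction k with
    | zero => simp
    | succ k ih =>
      rw [pow_succ, pow_succ, ← Matrix.mul_assoc, ih]
      simp [Matrix.mul_assoc]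
  induction p using Polynomial.induction_on' with
  | add p q hp hq => rw [map_add, map_add, Matrix.mul_add, Matrix.add_mul, hp, hq]
  | monomial k a =>
    rw [Polynomial.aeval_monomial, Polynomial.aeval_monomial]
    simp only [Algebra.algebraMap_eq_smul_one, Matrix.smul_mul, Matrix.mul_smul, Matrix.one_mul]
    rw [hpow]

lemma aeval_transpose {R : Type*} [CommRing R] (M : Matrix n n R) (p : Polynomial R) :
    (Polynomial.aeval M p)ᵀ = Polynomial.aeval Mᵀ p := by
  induction p using Polynomial.induction_on' with
  | add p q hp hq => rw [map_add, map_add, Matrix.transpose_add, hp, hq]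
  | monomial k a =>
    rw [Polynomial.aeval_monomial, Polynomial.aeval_monomial]
    simp only [Algebra.algebraMap_eq_smul_one, Matrix.smul_mul, Matrix.one_mul,
      Matrix.transpose_smul, Matrix.transpose_pow]

lemma transpose_mul_self_eq_zero (A : Matrix n n ℝ) (h : A * Aᵀ = 0) : A = 0 := by
  have key : Aᵀᵀ * Aᵀ = 0 := by rw [Matrix.transpose_transpose]; exact h
  have : Aᵀ = 0 := by
    have h2 : (Aᵀ)ᴴ * Aᵀ = 0 := by
      have : (Aᵀ)ᴴ = Aᵀᵀ := by
        ext i j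
        simp [Matrix.conjTranspose_apply]
      rw [this]; exact key
    exact Matrix.conjTranspose_mul_self_eq_zero.mp h2
  calc A = Aᵀᵀ := (Matrix.transpose_transpose A).symm
    _ = 0 := by rw [this]; simp

/-- from `aeval (B*Bᵀ) P = 0` conclude `aeval (Bᵀ*B) P = 0`, for `P = X*W`. -/
lemma aeval_transpose_side (B : Matrix n n ℝ) (W : Polynomial ℝ)
    (h : Polynomial.aeval (B * Bᵀ) (X * W) = 0) :
    Polynomial.aeval (Bᵀ * B) (X * W) = 0 := by
  have hWX : (X : Polynomial ℝ) * W = W * X := by ring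
  have h1 : Polynomial.aeval (B * Bᵀ) W * B * Bᵀ = 0 := by
    rw [hWX, _root_.map_mul, Polynomial.aeval_X] at h
    rw [Matrix.mul_assoc]
    exact h
  have hGGt : (Polynomial.aeval (B * Bᵀ) W * B) * (Polynomial.aeval (B * Bᵀ) W * B)ᵀ = 0 := by
    rw [Matrix.transpose_mul, ← Matrix.mul_assoc, h1, Matrix.zero_mul]
  have hG : Polynomial.aeval (B * Bᵀ) W * B = 0 := transpose_mul_self_eq_zero _ hGGt
  rw [hWX, _root_.map_mul, Polynomial.aeval_X]
  have hsymm : (Polynomial.aeval (Bᵀ * B) W)ᵀ = Polynomial.aeval (Bᵀ * B) W := by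
    rw [aeval_transpose, Matrix.transpose_mul, Matrix.transpose_transpose]
  calc Polynomial.aeval (Bᵀ * B) W * (Bᵀ * B)
      = (Polynomial.aeval (Bᵀ * B) W * Bᵀ) * B := by rw [Matrix.mul_assoc]
    _ = (B * (Polynomial.aeval (Bᵀ * B) W)ᵀ)ᵀ * B := by
        rw [Matrix.transpose_mul, Matrix.transpose_transpose]
    _ = (Polynomial.aeval (B * Bᵀ) W * B)ᵀ * B := by rw [hsymm, comm_mulB]
    _ = 0 := by rw [hG, Matrix.transpose_zero, Matrix.zero_mul]


end Generic

section Fib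
variable {F : Type*} [Field F] [Fintype F] {m : ℕ}
open scoped Classical in
lemma exists_fib_card_eq (hm1 : 1 ≤ m) (hmq : m ≤ Fintype.card F) :
    ∃ (t : Fin m → F) (a : F), (fib t a).card = m := by
  -- an injection `Fin m → F`
  set e : Fin m → F := fun i => (Fintype.equivFin F).symm (Fin.castLE hmq i) with he
  have hinj : Function.Injective e := fun i j h => by
    have := (Fintype.equivFin F).symm.injective h
    exact Fin.castLE_injective hmq this
  set g0 : Polynomial F := ∏ i : Fin m, (X - C (e i)) with hg0
  have hne : ∀ i : Fin m, (X - C (e i)) ≠ 0 := fun i => Polynomial.X_sub_C_ne_zero (e i)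
  have hdeg : g0.natDegree = m := by
    rw [hg0, Polynomial.natDegree_prod _ _ (fun i _ => hne i)]
    simp [Polynomial.natDegree_X_sub_C]
  refine ⟨fun i => g0.coeff ((i : ℕ) + 1), e ⟨0, hm1⟩, ?_⟩
  have hfp : ∀ z : F, fpoly (fun i : Fin m => g0.coeff ((i : ℕ) + 1)) z
      = g0.eval z - g0.coeff 0 := by
    intro z
    rw [fpoly_def, Polynomial.eval_eq_sum_range, hdeg, Finset.sum_range_succ']
    rw [← Fin.sum_univ_eq_sum_range (fun k => g0.coeff (k + 1) * z ^ (k + 1)) m]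
    simp [pow_zero]
  have hroots : ∀ x : F, g0.eval x = 0 ↔ ∃ i : Fin m, e i = x := by
    intro x
    rw [hg0, Polynomial.eval_prod, Finset.prod_eq_zero_iff]
    constructor
    · rintro ⟨i, _, hi⟩
      simp only [Polynomial.eval_sub, Polynomial.eval_X, Polynomial.eval_C, sub_eq_zero] at hi
      exact ⟨i, hi.symm⟩
    · rintro ⟨i, rfl⟩
      exact ⟨i, mem_univ i, by simp⟩
  have ha : g0.eval (e ⟨0, hm1⟩) = 0 := (hroots _).2 ⟨⟨0, hm1⟩, rfl⟩
  have hfib : fib (fun i : Fin m => g0.coeff ((i : ℕ) + 1)) (e ⟨0, hm1⟩)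
      = univ.image e := by
    ext x
    simp only [fib, mem_filter, mem_univ, true_and, mem_image]
    rw [hfp, hfp, ha]
    constructor
    · intro h
      have : g0.eval x = 0 := by linear_combination h
      obtain ⟨i, hi⟩ := (hroots x).1 this
      exact ⟨i, hi⟩
    · rintro ⟨i, rfl⟩
      rw [(hroots (e i)).2 ⟨i, rfl⟩]
  rw [hfib, Finset.card_image_of_injective _ hinj, Finset.card_univ, Fintype.card_fin]


end Fib
section Glue
variable {F : Type*} [Field F] [Fintype F] {m : ℕ}

open scoped Classical in
lemma Bmat_map {K L : Type*} [CommRing K] [CommRing L] (f : K →+* L) :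
    (Bmat F m K).map f = Bmat F m L := by
  ext p l
  by_cases h : wengerAdj p l <;> simp [Bmat, h, Matrix.map_apply]

lemma Cmat_map {K L : Type*} [CommRing K] [CommRing L] (f : K →+* L) :
    (Cmat F m K).map f = Cmat F m L := by
  rw [Cmat, Cmat, Matrix.map_mul (f := f), ← Bmat_map f, Matrix.transpose_map]

lemma Ppoly_map (q mm : ℕ) : (Ppoly q mm ℝ).map (algebraMap ℝ ℂ) = Ppoly q mm ℂ := by
  rw [Ppoly, Ppoly, Polynomial.map_mul, Polynomial.map_mul, Polynomial.map_sub,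
    Polynomial.map_X, Polynomial.map_C, ← Polynomial.coe_mapRingHom, map_prod]
  congr 1
  · congr 2
    simp
  · apply Finset.prod_congr rfl
    intro k _
    rw [Polynomial.coe_mapRingHom, Polynomial.map_sub, Polynomial.map_X, Polynomial.map_C]
    congr 1
    simp

open scoped Classical in
lemma aeval_Cmat_real :
    Polynomial.aeval (Cmat F m ℝ) (Ppoly (Fintype.card F) m ℝ) = 0 := by
  have : Finite F := Finite.of_fintype F
  set ψ := AddChar.FiniteField.primitiveChar_to_Complex F with hψdef
  have hψ : ψ.IsPrimitive := AddChar.FiniteField.primitiveChar_to_Complex_isPrimitive F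
  have hq0 : (Fintype.card F : ℂ) ≠ 0 := by
    simp [Fintype.card_ne_zero]
  have hC : Polynomial.aeval (Cmat F m ℂ) (Ppoly (Fintype.card F) m ℂ) = 0 :=
    aeval_Cmat_Ppoly ψ hψ hq0
  set Φ : Matrix (Fin (m+1) → F) (Fin (m+1) → F) ℝ →ₐ[ℝ]
      Matrix (Fin (m+1) → F) (Fin (m+1) → F) ℂ := (Algebra.ofId ℝ ℂ).mapMatrix with hΦdef
  have hΦC : Φ (Cmat F m ℝ) = Cmat F m ℂ := by
    show (Cmat F m ℝ).map (algebraMap ℝ ℂ) = Cmat F m ℂ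
    exact Cmat_map (algebraMap ℝ ℂ)
  have h1 : Φ (Polynomial.aeval (Cmat F m ℝ) (Ppoly (Fintype.card F) m ℝ)) = 0 := by
    rw [← Polynomial.aeval_algHom_apply, hΦC]
    rw [← Polynomial.aeval_map_algebraMap ℂ, Ppoly_map]
    exact hC
  have hinj : Function.Injective Φ := by
    intro M N h
    ext i j
    have := congrFun (congrFun (congrArg (fun (M : Matrix _ _ ℂ) i j => M i j) h) i) j
    simpa [hΦdef, AlgHom.mapMatrix_apply, Matrix.map_apply, Algebra.ofId_apply,
      Complex.ofReal_inj] using this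
  have := hinj (h1.trans (map_zero Φ).symm)
  exact this

open scoped Classical in
lemma aeval_Cmat'_real :
    Polynomial.aeval ((Bmat F m ℝ)ᵀ * Bmat F m ℝ) (Ppoly (Fintype.card F) m ℝ) = 0 := by
  have hsplit : Ppoly (Fintype.card F) m ℝ
      = X * ((X - C ((Fintype.card F : ℝ) * (Fintype.card F : ℝ))) *
          ∏ k ∈ Finset.range m, (X - C ((Fintype.card F : ℝ) * ((k : ℝ) + 1)))) := by
    rw [Ppoly, mul_assoc]
  rw [hsplit]
  apply aeval_transpose_side
  rw [← hsplit]
  exact aeval_Cmat_real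

open scoped Classical in
lemma wengerAdjMatrix_eq :
    wengerAdjMatrix F m
      = Matrix.fromBlocks 0 (Bmat F m ℝ) (Bmat F m ℝ)ᵀ 0 := by
  ext i j
  rcases i with p | l <;> rcases j with p' | l'
  · simp [wengerAdjMatrix, SimpleGraph.adjMatrix, Matrix.of_apply, WengerGraph, Matrix.fromBlocks]
  · by_cases h : wengerAdj p l' <;>
      simp [wengerAdjMatrix, SimpleGraph.adjMatrix, Matrix.of_apply, WengerGraph, Matrix.fromBlocks,
        Bmat, h]
  · by_cases h : wengerAdj p' l <;>
      simp [wengerAdjMatrix, SimpleGraph.adjMatrix, Matrix.of_apply, WengerGraph, Matrix.fromBlocks,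
        Bmat, h, Matrix.transpose_apply]
  · simp [wengerAdjMatrix, SimpleGraph.adjMatrix, Matrix.of_apply, WengerGraph, Matrix.fromBlocks]

end Glue
section Final
variable {F : Type*} [Field F] [Fintype F] {m : ℕ}

open scoped Classical in
lemma exists_real_eigvec (hm1 : 1 ≤ m) (hmq : m ≤ Fintype.card F) :
    ∃ w : (Fin (m+1) → F) → ℝ, w ≠ 0 ∧
      (Cmat F m ℝ).mulVec w = ((Fintype.card F : ℝ) * (m : ℝ)) • w := by
  have : Finite F := Finite.of_fintype F
  set ψ := AddChar.FiniteField.primitiveChar_to_Complex F with hψdef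
  have hψ : ψ.IsPrimitive := AddChar.FiniteField.primitiveChar_to_Complex_isPrimitive F
  obtain ⟨t, a, hcard⟩ := exists_fib_card_eq hm1 hmq
  set w1 : (Fin (m+1) → F) → ℂ :=
    testVec ψ t (fun X => if fpoly t a = fpoly t X then (Fintype.card F : ℂ) else 0) with hw1def
  have hw1 : (Cmat F m ℂ).mulVec w1 = ((Fintype.card F : ℂ) * (m : ℂ)) • w1 := by
    have h := act_fibind ψ hψ t a
    rw [hcard] at h
    exact h
  have hw1ne : w1 ≠ 0 := by
    intro h
    have hp0 : w1 (fun _ => a) = 0 := by rw [h]; rfl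
    rw [hw1def] at hp0
    simp only [testVec] at hp0
    rw [if_true] at hp0
    rcases mul_eq_zero.1 hp0 with h1 | h2
    · exact (Nat.cast_ne_zero.2 Fintype.card_ne_zero) h1
    · have hone : ψ (Tchar t (fun _ => a)) * ψ (- Tchar t (fun _ => a)) = 1 := by
        rw [← AddChar.map_add_eq_mul]
        simp
      rw [h2, zero_mul] at hone
      exact zero_ne_one hone
  set c : ℝ := (Fintype.card F : ℝ) * (m : ℝ) with hcdef
  have hccast : ((c : ℝ) : ℂ) = (Fintype.card F : ℂ) * (m : ℂ) := by
    rw [hcdef]; push_cast; ring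
  have hone : ((c • (1 : Matrix (Fin (m+1) → F) (Fin (m+1) → F) ℝ)).map (algebraMap ℝ ℂ))
      = ((c : ℝ) : ℂ) • (1 : Matrix (Fin (m+1) → F) (Fin (m+1) → F) ℂ) := by
    ext i j
    by_cases h : i = j <;>
      simp [Matrix.map_apply, Matrix.one_apply, h]
  have hdetC : (Cmat F m ℂ - ((Fintype.card F : ℂ) * (m : ℂ)) • 1).det = 0 := by
    apply Matrix.exists_mulVec_eq_zero_iff.1
    exact ⟨w1, hw1ne, by
      rw [Matrix.sub_mulVec, Matrix.smul_mulVec, Matrix.one_mulVec, hw1, sub_self]⟩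
  have hdetR : (Cmat F m ℝ - c • 1).det = 0 := by
    have hmd := RingHom.map_det (algebraMap ℝ ℂ) (Cmat F m ℝ - c • 1)
    have hmm : (algebraMap ℝ ℂ).mapMatrix (Cmat F m ℝ - c • 1)
        = Cmat F m ℂ - ((Fintype.card F : ℂ) * (m : ℂ)) • 1 := by
      rw [map_sub]
      congr 1
      · rw [RingHom.mapMatrix_apply]; exact Cmat_map _
      · rw [RingHom.mapMatrix_apply, hone, hccast]
    rw [hmm, hdetC] at hmd
    apply (algebraMap ℝ ℂ).injective
    rw [hmd, map_zero]
  obtain ⟨w, hwne, hw0⟩ := Matrix.exists_mulVec_eq_zero_iff.2 hdetR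
  refine ⟨w, hwne, ?_⟩
  rw [Matrix.sub_mulVec, Matrix.smul_mulVec, Matrix.one_mulVec, sub_eq_zero] at hw0
  exact hw0

end Final
end Wenger
open Wenger in
open scoped Classical in
/-- For a prime power `q` and `1 ≤ m ≤ q − 1`, the second largest
eigenvalue of the adjacency matrix of `W_m(q)` (the largest one strictly smaller than
the largest eigenvalue `q`) equals `√(m·q)`; in particular it is at most `2√q` iff
`m ≤ 4`. -/
theorem wenger_second_eigenvalue (q m : ℕ) (F : Type) [Field F] [Fintype F]
    (hq : Fintype.card F = q) (hm1 : 1 ≤ m) (hm2 : m ≤ q - 1) :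
    IsGreatest {x : ℝ |
        Module.End.HasEigenvalue ((wengerAdjMatrix F m).mulVecLin) x ∧ x < q}
      (Real.sqrt (m * q)) ∧
    (Real.sqrt (m * q) ≤ 2 * Real.sqrt q ↔ m ≤ 4) := by
  have hq2 : 2 ≤ q := by
    have := Fintype.one_lt_card (α := F)
    omega
  have hmltq : m < q := by omega
  have hqR : (0:ℝ) < q := by positivity
  have hmR : (0:ℝ) < m := by exact_mod_cast Nat.pos_of_ne_zero (by omega)
  set B := Bmat F m ℝ with hB
  set A := Matrix.fromBlocks 0 B Bᵀ (0 : Matrix (Fin (m+1) → F) (Fin (m+1) → F) ℝ) with hA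
  have hAeq : wengerAdjMatrix F m = A := wengerAdjMatrix_eq
  have hAA : A * A = Matrix.fromBlocks (Cmat F m ℝ) 0 0 (Bᵀ * B) := by
    rw [hA, Matrix.fromBlocks_multiply]
    simp [Cmat, hB]
  have hPAA : Polynomial.aeval (A * A) (Ppoly q m ℝ) = 0 := by
    rw [hAA, aeval_fromBlocks, ← hq, aeval_Cmat_real, aeval_Cmat'_real]
    simp
  have hσnonneg : (0:ℝ) ≤ (m:ℝ) * q := by positivity
  have hσσ : Real.sqrt (m * q) * Real.sqrt (m * q) = (m:ℝ) * q :=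
    Real.mul_self_sqrt hσnonneg
  have hσpos : 0 < Real.sqrt (m * q) := Real.sqrt_pos.2 (by positivity)
  have hσlt : Real.sqrt (m * q) < q := by
    have h1 : (m:ℝ) * q < (q:ℝ) * q := by
      have : (m:ℝ) < q := by exact_mod_cast hmltq
      nlinarith
    calc Real.sqrt (m * q) < Real.sqrt ((q:ℝ) * q) := Real.sqrt_lt_sqrt hσnonneg h1
      _ = q := Real.sqrt_mul_self hqR.le
  constructor
  · constructor
    · -- membership
      refine ⟨?_, hσlt⟩
      obtain ⟨w, hwne, hw⟩ := exists_real_eigvec (F := F) hm1 (by omega)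
      rw [hq] at hw
      set v : ((Fin (m+1) → F) ⊕ (Fin (m+1) → F)) → ℝ :=
        Sum.elim (Real.sqrt (m * q) • w) (Bᵀ.mulVec w) with hv
      have hblk1 : B.mulVec (Bᵀ.mulVec w)
          = Real.sqrt (m * q) • (Real.sqrt (m * q) • w) := by
        rw [Matrix.mulVec_mulVec]
        show (Cmat F m ℝ).mulVec w = _
        rw [hw, smul_smul, hσσ, mul_comm]
      have hAv : A.mulVec v = Real.sqrt (m * q) • v := by
        rw [hA, hv, Matrix.fromBlocks_mulVec]
        have e1 : (Sum.elim (Real.sqrt (m * q) • w) (Bᵀ.mulVec w)) ∘ Sum.inl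
            = Real.sqrt (m * q) • w := rfl
        have e2 : (Sum.elim (Real.sqrt (m * q) • w) (Bᵀ.mulVec w)) ∘ Sum.inr
            = Bᵀ.mulVec w := rfl
        rw [e1, e2, Matrix.zero_mulVec, Matrix.zero_mulVec, zero_add, add_zero, hblk1,
          Matrix.mulVec_smul]
        funext i
        rcases i with i | i <;> simp
      have hvne : v ≠ 0 := by
        intro h
        apply hwne
        funext j
        have hj := congrFun h (Sum.inl j)
        simp only [hv, Sum.elim_inl, Pi.smul_apply, Pi.zero_apply, smul_eq_mul] at hj
        rcases mul_eq_zero.1 hj with h' | h'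
        · exact absurd h' hσpos.ne'
        · exact h'
      have hev : Module.End.HasEigenvector ((wengerAdjMatrix F m).mulVecLin)
          (Real.sqrt (m * q)) v := by
        refine ⟨Module.End.mem_eigenspace_iff.2 ?_, hvne⟩
        rw [hAeq]
        show A.mulVec v = _
        rw [hAv]
      exact Module.End.hasEigenvalue_of_hasEigenvector hev
    · -- upper bound
      rintro x ⟨hx, hlt⟩
      obtain ⟨v, hv⟩ := hx.exists_hasEigenvector
      have hveq : A.mulVec v = x • v := by
        rw [← hAeq]
        exact hv.apply_eq_smul
      have hA2 : (A * A).mulVec v = (x * x) • v := by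
        rw [← Matrix.mulVec_mulVec, hveq, Matrix.mulVec_smul, hveq, smul_smul]
      have heval : (Ppoly q m ℝ).eval (x * x) = 0 := by
        have h0 := aeval_mulVec_eigen (A * A) v (x * x) hA2 (Ppoly q m ℝ)
        rw [hPAA, Matrix.zero_mulVec] at h0
        rcases smul_eq_zero.1 h0.symm with h | h
        · exact h
        · exact absurd h hv.2
      rw [Ppoly] at heval
      simp only [Polynomial.eval_mul, Polynomial.eval_X, Polynomial.eval_sub,
        Polynomial.eval_C, Polynomial.eval_prod] at heval
      rcases mul_eq_zero.1 heval with h12 | h3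
      · rcases mul_eq_zero.1 h12 with h1 | h2
        · rw [mul_self_eq_zero.1 h1]
          exact Real.sqrt_nonneg _
        · have hxq : (x - q) * (x + q) = 0 := by linear_combination h2
          rcases mul_eq_zero.1 hxq with h | h
          · exact absurd (by linarith : x = (q:ℝ)) hlt.ne
          · have hxe : x = -(q:ℝ) := by linarith
            rw [hxe]
            calc -(q:ℝ) ≤ 0 := by linarith
              _ ≤ _ := Real.sqrt_nonneg _
      · obtain ⟨k, hk, hk0⟩ := Finset.prod_eq_zero_iff.1 h3
        have hxx : x * x = (q:ℝ) * ((k:ℝ) + 1) := by linear_combination hk0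
        have hle : x * x ≤ (m:ℝ) * q := by
          rw [hxx]
          have hkm : (k:ℝ) + 1 ≤ m := by exact_mod_cast Finset.mem_range.1 hk
          nlinarith
        calc x ≤ |x| := le_abs_self x
          _ = Real.sqrt (x * x) := (Real.sqrt_mul_self_eq_abs x).symm
          _ ≤ Real.sqrt ((m:ℝ) * q) := Real.sqrt_le_sqrt hle
  · -- the iff
    have hsplit : Real.sqrt ((m:ℝ) * q) = Real.sqrt m * Real.sqrt q :=
      Real.sqrt_mul (Nat.cast_nonneg m) _
    have h4 : (2:ℝ) = Real.sqrt 4 := by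
      rw [show (4:ℝ) = 2^2 by norm_num, Real.sqrt_sq (by norm_num : (0:ℝ) ≤ 2)]
    have hsqrtqpos : 0 < Real.sqrt q := Real.sqrt_pos.2 hqR
    rw [hsplit]
    constructor
    · intro h
      have h' : Real.sqrt m ≤ 2 := le_of_mul_le_mul_right (by linarith [h]) hsqrtqpos
      rw [h4] at h'
      have : (m:ℝ) ≤ 4 :=
        (Real.sqrt_le_sqrt_iff (by norm_num : (0:ℝ) ≤ 4)).1 h'
      exact_mod_cast this
    · intro h
      have h' : Real.sqrt m ≤ 2 := by
        rw [h4]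
        apply Real.sqrt_le_sqrt
        exact_mod_cast h
      calc Real.sqrt m * Real.sqrt q ≤ 2 * Real.sqrt q := by nlinarith
        _ = 2 * Real.sqrt q := rfl
end

section
/- Let q be a prime power and m ≥ q an integer. Then the Wenger graph W_m(q) has exactly q^{m−q+1} connected components, and each connected component is isomorphic (as a graph) to W_{q−1}(q). -/
open Finset

set_option linter.unusedSectionVars false

namespace WengerAux
variable {F : Type} [Field F]

/-- Extend `r` (on `[0,q)`) past `q` using period-`(q-1)` jumps recorded in `cv`. -/
def lext (q : ℕ) (r cv : ℕ → F) : ℕ → F := fun n =>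
  if n < q ∨ q < 2 then (if n < q then r n else 0)
  else lext q r cv (n - (q-1)) + cv (n - q)
termination_by n => n
decreasing_by omega

lemma lext_lt {q : ℕ} {r cv : ℕ → F} {n : ℕ} (h : n < q) : lext q r cv n = r n := by
  rw [lext]; simp [h]

lemma lext_ge {q : ℕ} {r cv : ℕ → F} {n : ℕ} (h2 : 2 ≤ q) (h : q ≤ n) :
    lext q r cv n = lext q r cv (n - (q-1)) + cv (n - q) := by
  rw [lext]
  have hh : ¬ (n < q ∨ q < 2) := by omega
  rw [if_neg hh]

lemma lext_small {q : ℕ} (hq : q < 2) (r cv : ℕ → F) (n : ℕ) :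
    lext q r cv n = if n < q then r n else 0 := by
  rw [lext, if_pos (Or.inr hq)]

lemma lext_congr {q : ℕ} {r r' cv : ℕ → F} (h : ∀ n < q, r n = r' n) :
    ∀ n, lext q r cv n = lext q r' cv n := by
  intro n
  induction n using Nat.strong_induction_on with
  | _ n ih =>
    by_cases hn : n < q
    · rw [lext_lt hn, lext_lt hn]; exact h n hn
    · by_cases h2 : 2 ≤ q
      · rw [lext_ge (n := n) h2 (by omega), lext_ge (n := n) h2 (by omega)]
        exact congrArg (· + cv (n - q)) (ih _ (by omega))
      · have hq2 : q < 2 := by omega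
        rw [lext_small hq2, lext_small hq2]
        simp [hn]

/-- Master uniqueness: any function satisfying the recursion equals its `lext`. -/
lemma lext_unique {q m : ℕ} (h2 : 2 ≤ q) {f cv : ℕ → F}
    (hf : ∀ n, q ≤ n → n ≤ m → f n = f (n - (q-1)) + cv (n - q)) :
    ∀ n ≤ m, f n = lext q f cv n := by
  intro n
  induction n using Nat.strong_induction_on with
  | _ n ih =>
    intro hnm
    by_cases hn : n < q
    · rw [lext_lt hn]
    · rw [lext_ge h2 (by omega), ← ih _ (by omega) (by omega)]
      exact hf n (by omega) hnm

def lineOfAux (x : F) (pf : ℕ → F) : ℕ → F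
  | 0 => 0
  | n+1 => lineOfAux x pf n * x - pf (n+1)

def extend (m : ℕ) (f : Fin (m+1) → F) : ℕ → F := fun n =>
  if h : n < m+1 then f ⟨n, h⟩ else 0

lemma extend_eq {m : ℕ} (f : Fin (m+1) → F) {n : ℕ} (h : n < m+1) :
    extend m f n = f ⟨n, h⟩ := dif_pos h

lemma lineOfAux_congr {x : F} {pf pf' : ℕ → F} (k : ℕ) (h : ∀ n ≤ k, pf n = pf' n) :
    lineOfAux x pf k = lineOfAux x pf' k := by
  induction k with
  | zero => rfl
  | succ n ih =>
    simp only [lineOfAux]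
    rw [ih (fun n hn => h n (by omega)), h (n+1) le_rfl]

/-- Lemma A: any line adjacent to `p` is the canonical line shifted by `l 0 · (p 0)^n`. -/
lemma adj_line_formula {m : ℕ} {p l : Fin (m+1) → F} (h : wengerAdj p l) :
    ∀ n ≤ m, extend m l n = lineOfAux (p 0) (extend m p) n + l 0 * (p 0)^n := by
  intro n
  induction n with
  | zero =>
    intro _
    rw [extend_eq l (by omega)]
    simp [lineOfAux]
  | succ n ih =>
    intro hn
    have hn1 : n < m := by omega
    have hn2 : n + 1 < m + 1 := by omega
    have hn3 : n < m + 1 := by omega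
    have hrec := h ⟨n, hn1⟩
    have hl : l ⟨n+1, hn2⟩ = l ⟨n, hn3⟩ * p 0 - p ⟨n+1, hn2⟩ := by
      have e1 : (⟨n, hn1⟩ : Fin m).succ = (⟨n+1, hn2⟩ : Fin (m+1)) := rfl
      have e2 : (⟨n, hn1⟩ : Fin m).castSucc = (⟨n, hn3⟩ : Fin (m+1)) := rfl
      rw [e1, e2] at hrec
      exact eq_sub_of_add_eq hrec
    rw [extend_eq l hn2, hl]
    have hih := ih (by omega)
    rw [extend_eq l hn3] at hih
    rw [hih]
    simp only [lineOfAux]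
    rw [extend_eq p hn2]
    ring

/-- Lemma B: for any `c`, the canonical line shifted by `c · (p 0)^n` is adjacent to `p`. -/
lemma adj_canLine {m : ℕ} (p : Fin (m+1) → F) (c : F) :
    wengerAdj p (fun i => lineOfAux (p 0) (extend m p) i + c * (p 0)^(i : ℕ)) := by
  intro i
  have h1 : ((i.succ : Fin (m+1)) : ℕ) = (i : ℕ) + 1 := rfl
  have h2 : ((i.castSucc : Fin (m+1)) : ℕ) = (i : ℕ) := rfl
  simp only [h1, h2]
  show lineOfAux (p 0) (extend m p) ((i:ℕ)+1) + c * (p 0)^((i:ℕ)+1) + p i.succ = _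
  simp only [lineOfAux]
  rw [extend_eq p (by omega)]
  have h3 : p ⟨(i:ℕ)+1, by omega⟩ = p i.succ := by congr 1
  rw [h3]
  ring

lemma mk0 {m : ℕ} (h : 0 < m + 1) : (⟨0, h⟩ : Fin (m+1)) = 0 := by
  ext; simp

lemma extend_zero {m : ℕ} (f : Fin (m+1) → F) : extend m f 0 = f 0 := by
  rw [extend_eq f (by omega), mk0]

/-- The line function attached to a vertex. -/
def lfun (m : ℕ) (v : (Fin (m+1) → F) ⊕ (Fin (m+1) → F)) : ℕ → F :=
  match v with
  | .inl p => lineOfAux (p 0) (extend m p)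
  | .inr l => extend m l

/-- The component invariant of a vertex. -/
def invf (q m : ℕ) (v : (Fin (m+1) → F) ⊕ (Fin (m+1) → F)) : Fin (m - q + 1) → F :=
  fun j => lfun m v ((j : ℕ) + q) - lfun m v ((j : ℕ) + 1)

section Inv
variable [Fintype F] {q m : ℕ}

lemma two_le_q (hq : Fintype.card F = q) : 2 ≤ q := hq ▸ Fintype.one_lt_card

lemma pow_q (hq : Fintype.card F = q) (x : F) : x ^ q = x := hq ▸ FiniteField.pow_card x

lemma pow_shift (hq : Fintype.card F = q) {n k : ℕ} (hk : 1 ≤ k) (hn : n = (k - 1) + q) (x : F) :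
    x ^ n = x ^ k := by
  have h2 := two_le_q hq
  rw [hn, pow_add, pow_q hq, ← pow_succ]
  congr 1
  omega

/-- Lemma C: adjacency preserves the invariant. -/
lemma invf_adj (hq : Fintype.card F = q) (hm : q ≤ m) {p l : Fin (m+1) → F} (h : wengerAdj p l) :
    invf q m (.inl p) = invf q m (.inr l) := by
  have h2 := two_le_q hq
  funext j
  have hj : (j : ℕ) < m - q + 1 := j.isLt
  have e1 := adj_line_formula h ((j : ℕ) + q) (by omega)
  have e2 := adj_line_formula h ((j : ℕ) + 1) (by omega)
  have e3 : (p 0) ^ ((j : ℕ) + q) = (p 0) ^ ((j : ℕ) + 1) :=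
    pow_shift hq (by omega) (by omega) (p 0)
  show lineOfAux (p 0) (extend m p) ((j:ℕ) + q) - lineOfAux (p 0) (extend m p) ((j:ℕ) + 1)
      = extend m l ((j:ℕ) + q) - extend m l ((j:ℕ) + 1)
  rw [e1, e2, e3]
  ring

/-- Edges of the Wenger graph preserve the invariant. -/
lemma invf_edge (hq : Fintype.card F = q) (hm : q ≤ m) {v w : (Fin (m+1) → F) ⊕ (Fin (m+1) → F)}
    (h : (WengerGraph F m).Adj v w) : invf q m v = invf q m w := by
  match v, w with
  | Sum.inl p, Sum.inr l => exact invf_adj hq hm (h : wengerAdj p l)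
  | Sum.inr l, Sum.inl p => exact (invf_adj hq hm (h : wengerAdj p l)).symm
  | Sum.inl _, Sum.inl _ => exact absurd h (by simp [WengerGraph])
  | Sum.inr _, Sum.inr _ => exact absurd h (by simp [WengerGraph])

end Inv

/-- The point through which `l` and its shift by `t·(x^i)_i` are both adjacent. -/
def pointOf {m : ℕ} (l : Fin (m+1) → F) (x : F) : Fin (m+1) → F :=
  fun i => if h : (i : ℕ) = 0 then x else l ⟨(i : ℕ) - 1, by omega⟩ * x - l i

lemma pointOf_zero {m : ℕ} (l : Fin (m+1) → F) (x : F) : pointOf l x 0 = x := by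
  simp [pointOf]

lemma pointOf_succ {m : ℕ} (l : Fin (m+1) → F) (x : F) (i : Fin m) :
    pointOf l x i.succ = l i.castSucc * x - l i.succ := by
  have h0 : ((i.succ : Fin (m+1)) : ℕ) = (i : ℕ) + 1 := rfl
  have h1 : ¬ ((i.succ : Fin (m+1)) : ℕ) = 0 := by omega
  rw [pointOf]
  rw [dif_neg h1]
  have e : (⟨((i.succ : Fin (m+1)) : ℕ) - 1, by omega⟩ : Fin (m+1)) = i.castSucc := by
    ext; simp [h0]
  rw [e]

lemma adj_pointOf {m : ℕ} (l : Fin (m+1) → F) (x : F) : wengerAdj (pointOf l x) l := by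
  intro i
  rw [pointOf_succ, pointOf_zero]
  ring

lemma adj_pointOf_shift {m : ℕ} (l : Fin (m+1) → F) (x t : F) :
    wengerAdj (pointOf l x) (fun i => l i + t * x ^ (i : ℕ)) := by
  intro i
  rw [pointOf_succ, pointOf_zero]
  have h0 : ((i.succ : Fin (m+1)) : ℕ) = (i : ℕ) + 1 := rfl
  have h1 : ((i.castSucc : Fin (m+1)) : ℕ) = (i : ℕ) := rfl
  show l i.succ + t * x ^ ((i.succ : Fin (m+1)) : ℕ) + _ = (l i.castSucc + t * x ^ ((i.castSucc : Fin (m+1)) : ℕ)) * x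
  rw [h0, h1]
  ring

lemma reach_shift {m : ℕ} (l : Fin (m+1) → F) (x t : F) :
    (WengerGraph F m).Reachable (.inr l) (.inr (fun i => l i + t * x ^ (i : ℕ))) := by
  have h1 : (WengerGraph F m).Adj (.inr l) (.inl (pointOf l x)) := adj_pointOf l x
  have h2 : (WengerGraph F m).Adj (.inl (pointOf l x)) (.inr (fun i => l i + t * x ^ (i : ℕ))) :=
    adj_pointOf_shift l x t
  exact h1.reachable.trans h2.reachable

lemma reach_sum {m : ℕ} (t : F → F) (s : Finset F) :
    ∀ l : Fin (m+1) → F,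
      (WengerGraph F m).Reachable (.inr l) (.inr (fun i => l i + ∑ x ∈ s, t x * x ^ (i : ℕ))) := by
  classical
  induction s using Finset.induction_on with
  | empty =>
    intro l
    have e : (fun i : Fin (m+1) => l i + ∑ x ∈ (∅ : Finset F), t x * x ^ (i : ℕ)) = l := by
      funext i; simp
    rw [e]
  | insert a s' ha ih =>
    intro l
    have e : (fun i : Fin (m+1) => l i + ∑ x ∈ insert a s', t x * x ^ (i : ℕ))
        = fun i => (l i + t a * a ^ (i : ℕ)) + ∑ x ∈ s', t x * x ^ (i : ℕ) := by
      funext i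
      rw [Finset.sum_insert ha]
      ring
    rw [e]
    exact (reach_shift l a (t a)).trans (ih (fun i => l i + t a * a ^ (i : ℕ)))

/-- Moment surjectivity: any vector of first `q` moments is achievable. -/
lemma moment_surj [Fintype F] {q : ℕ} (hq : Fintype.card F = q) (w : Fin q → F) :
    ∃ t : F → F, ∀ j : Fin q, ∑ x : F, t x * x ^ (j : ℕ) = w j := by
  classical
  let e : F ≃ Fin q := Fintype.equivFinOfCardEq hq
  let M : Matrix (Fin q) (Fin q) F := Matrix.of fun i k => (e.symm k : F) ^ (i : ℕ)
  have hMt : M = (Matrix.vandermonde (fun k => (e.symm k : F))).transpose := by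
    ext i k
    rfl
  have hdet : IsUnit M.det := by
    rw [hMt, Matrix.det_transpose, Matrix.det_vandermonde]
    rw [isUnit_iff_ne_zero]
    rw [Finset.prod_ne_zero_iff]
    intro i _
    rw [Finset.prod_ne_zero_iff]
    intro j hj
    rw [Finset.mem_Ioi] at hj
    exact sub_ne_zero_of_ne (fun hcontra => (ne_of_gt hj).symm (e.symm.injective hcontra).symm)
  set t' : Fin q → F := M⁻¹.mulVec w with ht'
  have key : M.mulVec t' = w := by
    rw [ht', Matrix.mulVec_mulVec, Matrix.mul_nonsing_inv _ hdet, Matrix.one_mulVec]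
  refine ⟨fun x => t' (e x), fun j => ?_⟩
  have e1 : ∑ x : F, t' (e x) * x ^ (j : ℕ) = ∑ k : Fin q, t' k * (e.symm k : F) ^ (j : ℕ) :=
    Fintype.sum_equiv e _ _ (fun x => by simp)
  rw [e1, ← key]
  show _ = ∑ k, M j k * t' k
  exact Finset.sum_congr rfl fun k _ => mul_comm _ _

/-- Two lines with the same invariant are in the same component. -/
lemma reach_same_inv [Fintype F] {q m : ℕ} (hq : Fintype.card F = q) (hm : q ≤ m)
    {l l' : Fin (m+1) → F} (h : invf q m (.inr l) = invf q m (.inr l')) :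
    (WengerGraph F m).Reachable (.inr l) (.inr l') := by
  have h2 := two_le_q hq
  set v : ℕ → F := fun n => extend m l' n - extend m l n with hv
  obtain ⟨t, ht⟩ := moment_surj hq (fun j => v (j : ℕ))
  have hinv : ∀ jn, jn < m - q + 1 → v (jn + q) = v (jn + 1) := by
    intro jn hjn
    have := congrFun h ⟨jn, hjn⟩
    show extend m l' (jn + q) - extend m l (jn + q) = extend m l' (jn + 1) - extend m l (jn + 1)
    have hthis : extend m l (jn + q) - extend m l (jn + 1)
        = extend m l' (jn + q) - extend m l' (jn + 1) := this
    linear_combination -hthis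
  have key : ∀ n ≤ m, ∑ x : F, t x * x ^ n = v n := by
    intro n
    induction n using Nat.strong_induction_on with
    | _ n ih =>
      intro hnm
      by_cases hn : n < q
      · exact ht ⟨n, hn⟩
      · have hk1 : 1 ≤ n - (q - 1) := by omega
        have e1 : ∀ x : F, x ^ n = x ^ (n - (q - 1)) := fun x =>
          pow_shift hq hk1 (by omega) x
        have e2 : ∑ x : F, t x * x ^ n = ∑ x : F, t x * x ^ (n - (q - 1)) :=
          Finset.sum_congr rfl fun x _ => by rw [e1 x]
        rw [e2, ih _ (by omega) (by omega)]
        have := hinv (n - q) (by omega)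
        have en : n - q + q = n := by omega
        have en1 : n - q + 1 = n - (q - 1) := by omega
        rw [en, en1] at this
        exact this.symm
  have hfin : l' = fun i : Fin (m+1) => l i + ∑ x : F, t x * x ^ (i : ℕ) := by
    funext i
    have := key (i : ℕ) (by omega)
    rw [show v (i : ℕ) = l' i - l i by
      rw [hv]
      show extend m l' (i : ℕ) - extend m l (i : ℕ) = _
      rw [extend_eq l' i.isLt, extend_eq l i.isLt]] at this
    rw [this]
    ring
  rw [hfin]
  exact reach_sum t Finset.univ l

section Comp
variable [Fintype F] {q m : ℕ}

/-- The invariant descends to connected components. -/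
def phi (hq : Fintype.card F = q) (hm : q ≤ m) :
    (WengerGraph F m).ConnectedComponent → (Fin (m - q + 1) → F) :=
  SimpleGraph.ConnectedComponent.lift (invf q m) (by
    intro v w p hp
    clear hp
    induction p with
    | nil => rfl
    | cons h p ih => exact (invf_edge hq hm h).trans ih)

lemma phi_mk (hq : Fintype.card F = q) (hm : q ≤ m)
    (v : (Fin (m+1) → F) ⊕ (Fin (m+1) → F)) :
    phi hq hm ((WengerGraph F m).connectedComponentMk v) = invf q m v := rfl

/-- Every vertex is connected to a line with the same invariant. -/
lemma vertex_line (hq : Fintype.card F = q) (hm : q ≤ m)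
    (v : (Fin (m+1) → F) ⊕ (Fin (m+1) → F)) :
    ∃ l : Fin (m+1) → F, (WengerGraph F m).Reachable v (.inr l) ∧
      invf q m (.inr l) = invf q m v := by
  match v with
  | Sum.inr l => exact ⟨l, SimpleGraph.Reachable.refl _, rfl⟩
  | Sum.inl p =>
    refine ⟨fun i => lineOfAux (p 0) (extend m p) (i : ℕ), ?_, ?_⟩
    · have hadj : wengerAdj p (fun i => lineOfAux (p 0) (extend m p) (i : ℕ)) := by
        intro i
        have := adj_canLine p 0 i
        simpa using this
      exact (SimpleGraph.Adj.reachable (show (WengerGraph F m).Adj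
        (.inl p) (.inr (fun i => lineOfAux (p 0) (extend m p) (i : ℕ))) from hadj))
    · have hadj : wengerAdj p (fun i => lineOfAux (p 0) (extend m p) (i : ℕ)) := by
        intro i
        have := adj_canLine p 0 i
        simpa using this
      exact (invf_adj hq hm hadj).symm

lemma phi_injective (hq : Fintype.card F = q) (hm : q ≤ m) :
    Function.Injective (phi hq hm) := by
  intro c c' h
  obtain ⟨v, rfl⟩ := c.exists_rep
  obtain ⟨v', rfl⟩ := c'.exists_rep
  have h' : invf q m v = invf q m v' := h
  clear h; rename' h' => h
  obtain ⟨l, hr, he⟩ := vertex_line hq hm v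
  obtain ⟨l', hr', he'⟩ := vertex_line hq hm v'
  have : invf q m (Sum.inr l) = invf q m (Sum.inr l') := by rw [he, he', h]
  exact SimpleGraph.ConnectedComponent.sound
    (hr.trans ((reach_same_inv hq hm this).trans hr'.symm))

lemma phi_surjective (hq : Fintype.card F = q) (hm : q ≤ m) :
    Function.Surjective (phi hq hm) := by
  classical
  intro w
  have h2 := two_le_q hq
  set cvN : ℕ → F := fun j => if h : j < m - q + 1 then w ⟨j, h⟩ else 0 with hcvN
  set l₀ : Fin (m+1) → F := fun i => lext q (fun _ => (0:F)) cvN (i : ℕ) with hl₀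
  refine ⟨(WengerGraph F m).connectedComponentMk (.inr l₀), ?_⟩
  have : invf q m (.inr l₀) = w := by
    funext j
    have hj : (j : ℕ) < m - q + 1 := j.isLt
    show extend m l₀ ((j:ℕ) + q) - extend m l₀ ((j:ℕ) + 1) = w j
    rw [extend_eq l₀ (show (j:ℕ) + q < m + 1 by omega),
        extend_eq l₀ (show (j:ℕ) + 1 < m + 1 by omega)]
    show lext q (fun _ => (0:F)) cvN ((j:ℕ) + q) - lext q (fun _ => (0:F)) cvN ((j:ℕ) + 1) = w j
    rw [lext_ge h2 (by omega)]
    have e1 : (j:ℕ) + q - (q - 1) = (j:ℕ) + 1 := by omega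
    have e2 : (j:ℕ) + q - q = (j:ℕ) := by omega
    rw [e1, e2]
    simp [hcvN, hj]
    intro hc; omega
  rw [phi_mk, this]

lemma card_components (hq : Fintype.card F = q) (hm : q ≤ m) :
    Nat.card (WengerGraph F m).ConnectedComponent = q ^ (m - q + 1) := by
  have hcongr := Nat.card_congr
    (Equiv.ofBijective (phi hq hm) ⟨phi_injective hq hm, phi_surjective hq hm⟩)
  rw [hcongr, Nat.card_fun, Nat.card_eq_fintype_card (α := F), hq,
    Nat.card_eq_fintype_card (α := Fin (m - q + 1)), Fintype.card_fin]

end Comp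

section Part2
variable [Fintype F] {q m : ℕ}

/-- Extension-by-dite of a finite invariant vector. -/
def cvE (q m : ℕ) (w : Fin (m - q + 1) → F) : ℕ → F :=
  fun j => if h : j < m - q + 1 then w ⟨j, h⟩ else 0

/-- Truncation to the first `q` coordinates. -/
def trunc (q m : ℕ) (hm : q ≤ m) (f : Fin (m+1) → F) : Fin (q-1+1) → F :=
  fun i => f (Fin.castLE (by omega) i)

lemma trunc_mk (hm : q ≤ m) (f : Fin (m+1) → F) {n : ℕ} (hn : n < q-1+1) (hn' : n < m+1) :
    trunc q m hm f ⟨n, hn⟩ = f ⟨n, hn'⟩ := rfl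

lemma trunc_zero (hm : q ≤ m) (f : Fin (m+1) → F) : trunc q m hm f 0 = f 0 := by
  show f (Fin.castLE _ 0) = f 0
  congr 1

/-- A line satisfies the `lext` recursion against its invariant. -/
lemma line_rec (hq : Fintype.card F = q) (hm : q ≤ m) {l : Fin (m+1) → F}
    {w : Fin (m - q + 1) → F} (hw : invf q m (.inr l) = w) :
    ∀ n, q ≤ n → n ≤ m → extend m l n = extend m l (n - (q-1)) + cvE q m w (n - q) := by
  intro n hqn hnm
  have h2 := two_le_q hq
  have hj : n - q < m - q + 1 := by omega
  have hcv : cvE q m w (n - q) = w ⟨n - q, hj⟩ := dif_pos hj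
  have := congrFun hw ⟨n - q, hj⟩
  have hthis : extend m l ((n - q) + q) - extend m l ((n - q) + 1) = w ⟨n - q, hj⟩ := this
  have e1 : n - q + q = n := by omega
  have e2 : n - q + 1 = n - (q - 1) := by omega
  rw [e1, e2] at hthis
  rw [hcv]
  linear_combination hthis

/-- A point's canonical line satisfies the `lext` recursion against its invariant. -/
lemma point_rec (hq : Fintype.card F = q) (hm : q ≤ m) {p : Fin (m+1) → F}
    {w : Fin (m - q + 1) → F} (hw : invf q m (.inl p) = w) :
    ∀ n, q ≤ n → n ≤ m → lineOfAux (p 0) (extend m p) n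
      = lineOfAux (p 0) (extend m p) (n - (q-1)) + cvE q m w (n - q) := by
  intro n hqn hnm
  have h2 := two_le_q hq
  have hj : n - q < m - q + 1 := by omega
  have hcv : cvE q m w (n - q) = w ⟨n - q, hj⟩ := dif_pos hj
  have := congrFun hw ⟨n - q, hj⟩
  have hthis : lineOfAux (p 0) (extend m p) ((n - q) + q)
      - lineOfAux (p 0) (extend m p) ((n - q) + 1) = w ⟨n - q, hj⟩ := this
  have e1 : n - q + q = n := by omega
  have e2 : n - q + 1 = n - (q - 1) := by omega
  rw [e1, e2] at hthis
  rw [hcv]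
  linear_combination hthis

/-- Two lines with the same invariant and the same truncation agree. -/
lemma line_unique (hq : Fintype.card F = q) (hm : q ≤ m) {l l' : Fin (m+1) → F}
    {w : Fin (m - q + 1) → F} (hw : invf q m (.inr l) = w) (hw' : invf q m (.inr l') = w)
    (ht : trunc q m hm l = trunc q m hm l') : l = l' := by
  have h2 := two_le_q hq
  have hlow : ∀ n < q, extend m l n = extend m l' n := by
    intro n hn
    rw [extend_eq l (by omega), extend_eq l' (by omega)]
    have := congrFun ht ⟨n, by omega⟩
    rw [trunc_mk hm l (by omega) (by omega), trunc_mk hm l' (by omega) (by omega)] at this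
    exact this
  have key : ∀ n ≤ m, extend m l n = extend m l' n := by
    intro n hn
    rw [lext_unique h2 (line_rec hq hm hw) n hn,
        lext_unique h2 (line_rec hq hm hw') n hn]
    exact lext_congr hlow n
  funext i
  have := key (i : ℕ) (by omega)
  rwa [extend_eq l i.isLt, extend_eq l' i.isLt] at this

/-- Two points with the same invariant and the same truncation agree. -/
lemma point_unique (hq : Fintype.card F = q) (hm : q ≤ m) {p p' : Fin (m+1) → F}
    {w : Fin (m - q + 1) → F} (hw : invf q m (.inl p) = w) (hw' : invf q m (.inl p') = w)
    (ht : trunc q m hm p = trunc q m hm p') : p = p' := by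
  have h2 := two_le_q hq
  have h0 : p 0 = p' 0 := by
    have := congrFun ht 0
    rwa [trunc_zero, trunc_zero] at this
  have hplow : ∀ n < q, extend m p n = extend m p' n := by
    intro n hn
    rw [extend_eq p (by omega), extend_eq p' (by omega)]
    have := congrFun ht ⟨n, by omega⟩
    rw [trunc_mk hm p (by omega) (by omega), trunc_mk hm p' (by omega) (by omega)] at this
    exact this
  have hlow : ∀ n < q, lineOfAux (p 0) (extend m p) n = lineOfAux (p' 0) (extend m p') n := by
    intro n hn
    rw [← h0]
    exact lineOfAux_congr n (fun k hk => hplow k (by omega))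
  have key : ∀ n ≤ m, lineOfAux (p 0) (extend m p) n = lineOfAux (p' 0) (extend m p') n := by
    intro n hn
    rw [lext_unique h2 (point_rec hq hm hw) n hn,
        lext_unique h2 (point_rec hq hm hw') n hn]
    exact lext_congr hlow n
  have hext : ∀ n ≤ m, extend m p n = extend m p' n := by
    intro n hn
    match n with
    | 0 => rw [extend_zero, extend_zero]; exact h0
    | Nat.succ k =>
      have e1 : lineOfAux (p 0) (extend m p) (k+1)
          = lineOfAux (p 0) (extend m p) k * p 0 - extend m p (k+1) := rfl
      have e2 : lineOfAux (p' 0) (extend m p') (k+1)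
          = lineOfAux (p' 0) (extend m p') k * p' 0 - extend m p' (k+1) := rfl
      have k1 := key (k+1) hn
      have k2 := key k (by omega)
      rw [e1, e2, k2, h0] at k1
      linear_combination -k1
  funext i
  have := hext (i : ℕ) (by omega)
  rwa [extend_eq p i.isLt, extend_eq p' i.isLt] at this

/-- Existence of a line with given invariant and truncation. -/
lemma line_exists (hq : Fintype.card F = q) (hm : q ≤ m)
    (w : Fin (m - q + 1) → F) (r : Fin (q-1+1) → F) :
    ∃ l : Fin (m+1) → F, invf q m (.inr l) = w ∧ trunc q m hm l = r := by
  classical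
  have h2 := two_le_q hq
  set rN : ℕ → F := fun n => if h : n < q-1+1 then r ⟨n, h⟩ else 0 with hrN
  set l : Fin (m+1) → F := fun i => lext q rN (cvE q m w) (i : ℕ) with hl
  refine ⟨l, ?_, ?_⟩
  · funext j
    have hj : (j : ℕ) < m - q + 1 := j.isLt
    show extend m l ((j:ℕ) + q) - extend m l ((j:ℕ) + 1) = w j
    rw [extend_eq l (show (j:ℕ) + q < m + 1 by omega),
        extend_eq l (show (j:ℕ) + 1 < m + 1 by omega)]
    show lext q rN (cvE q m w) ((j:ℕ) + q) - lext q rN (cvE q m w) ((j:ℕ) + 1) = w j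
    rw [lext_ge h2 (by omega)]
    have e1 : (j:ℕ) + q - (q - 1) = (j:ℕ) + 1 := by omega
    have e2 : (j:ℕ) + q - q = (j:ℕ) := by omega
    rw [e1, e2]
    simp [cvE, hj]
  · funext i
    have hi : (i : ℕ) < q - 1 + 1 := i.isLt
    show l (Fin.castLE (by omega) i) = r i
    show lext q rN (cvE q m w) ((Fin.castLE (show q-1+1 ≤ m+1 by omega) i : Fin (m+1)) : ℕ) = r i
    have hv : ((Fin.castLE (show q-1+1 ≤ m+1 by omega) i : Fin (m+1)) : ℕ) = (i : ℕ) := rfl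
    rw [hv, lext_lt (show (i:ℕ) < q by omega)]
    simp [hrN, hi]
    intro hc; omega

/-- Existence of a point with given invariant and truncation. -/
lemma point_exists (hq : Fintype.card F = q) (hm : q ≤ m)
    (w : Fin (m - q + 1) → F) (r : Fin (q-1+1) → F) :
    ∃ p : Fin (m+1) → F, invf q m (.inl p) = w ∧ trunc q m hm p = r := by
  classical
  have h2 := two_le_q hq
  set rN : ℕ → F := fun n => if h : n < q-1+1 then r ⟨n, h⟩ else 0 with hrN
  set LL : ℕ → F := lext q (lineOfAux (rN 0) rN) (cvE q m w) with hLL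
  set p : Fin (m+1) → F :=
    fun i => if (i : ℕ) < q then rN (i : ℕ) else LL ((i : ℕ) - 1) * rN 0 - LL (i : ℕ) with hp
  have hp0 : p 0 = rN 0 := by
    show (if ((0 : Fin (m+1)) : ℕ) < q then rN ((0 : Fin (m+1)) : ℕ) else _) = rN 0
    rw [if_pos]
    · norm_num
    · simp; omega
  have hbase : ∀ n < q, LL n = lineOfAux (rN 0) rN n := fun n hn => lext_lt hn
  have claimA : ∀ n ≤ m, lineOfAux (p 0) (extend m p) n = LL n := by
    intro n
    induction n with
    | zero =>
      intro _
      rw [hbase 0 (by omega)]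
      rfl
    | succ k ih =>
      intro hk
      have e1 : lineOfAux (p 0) (extend m p) (k+1)
          = lineOfAux (p 0) (extend m p) k * p 0 - extend m p (k+1) := rfl
      rw [e1, ih (by omega), hp0, extend_eq p (by omega)]
      by_cases hkq : k + 1 < q
      · have hpv : p ⟨k+1, by omega⟩ = rN (k+1) := if_pos hkq
        rw [hpv, hbase (k+1) hkq, hbase k (by omega)]
        rfl
      · have hpv : p ⟨k+1, by omega⟩ = LL k * rN 0 - LL (k+1) := by
          show (if ((⟨k+1, by omega⟩ : Fin (m+1)) : ℕ) < q then _ else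
            LL (((⟨k+1, by omega⟩ : Fin (m+1)) : ℕ) - 1) * rN 0
              - LL ((⟨k+1, by omega⟩ : Fin (m+1)) : ℕ)) = _
          rw [if_neg hkq]
          norm_num
        rw [hpv]
        ring
  refine ⟨p, ?_, ?_⟩
  · funext j
    have hj : (j : ℕ) < m - q + 1 := j.isLt
    show lineOfAux (p 0) (extend m p) ((j:ℕ) + q) - lineOfAux (p 0) (extend m p) ((j:ℕ) + 1) = w j
    rw [claimA ((j:ℕ) + q) (by omega), claimA ((j:ℕ) + 1) (by omega)]
    rw [show LL ((j:ℕ) + q) = LL ((j:ℕ)+q-(q-1)) + cvE q m w ((j:ℕ)+q-q) from lext_ge h2 (by omega)]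
    have e1 : (j:ℕ) + q - (q - 1) = (j:ℕ) + 1 := by omega
    have e2 : (j:ℕ) + q - q = (j:ℕ) := by omega
    rw [e1, e2]
    simp [cvE, hj]
  · funext i
    have hi : (i : ℕ) < q - 1 + 1 := i.isLt
    show p (Fin.castLE (by omega) i) = r i
    have hv : ((Fin.castLE (show q-1+1 ≤ m+1 by omega) i : Fin (m+1)) : ℕ) = (i : ℕ) := rfl
    show (if ((Fin.castLE (show q-1+1 ≤ m+1 by omega) i : Fin (m+1)) : ℕ) < q then
        rN ((Fin.castLE (show q-1+1 ≤ m+1 by omega) i : Fin (m+1)) : ℕ) else _) = r i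
    rw [hv, if_pos (show (i:ℕ) < q by omega)]
    simp [hrN, hi]
    intro hc; omega

end Part2

section Part3
variable [Fintype F] {q m : ℕ}

/-- Truncation preserves adjacency. -/
lemma trunc_adj (hq : Fintype.card F = q) (hm : q ≤ m) {p l : Fin (m+1) → F}
    (h : wengerAdj p l) : wengerAdj (trunc q m hm p) (trunc q m hm l) := by
  have h2 := two_le_q hq
  intro i
  have hi : (i : ℕ) < q - 1 := i.isLt
  set j : Fin m := ⟨(i : ℕ), by omega⟩ with hj
  have hrel := h j
  have e1 : Fin.castLE (show q-1+1 ≤ m+1 by omega) i.succ = j.succ := by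
    ext; simp [hj]
  have e2 : Fin.castLE (show q-1+1 ≤ m+1 by omega) i.castSucc = j.castSucc := by
    ext; simp [hj]
  show l (Fin.castLE _ i.succ) + p (Fin.castLE _ i.succ)
      = l (Fin.castLE _ i.castSucc) * trunc q m hm p 0
  rw [e1, e2, trunc_zero]
  exact hrel

/-- In a fixed component, adjacency of truncations implies adjacency. -/
lemma adj_of_trunc (hq : Fintype.card F = q) (hm : q ≤ m) {w : Fin (m - q + 1) → F}
    {p l : Fin (m+1) → F} (hp : invf q m (.inl p) = w) (hl : invf q m (.inr l) = w)
    (h : wengerAdj (trunc q m hm p) (trunc q m hm l)) : wengerAdj p l := by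
  have h2 := two_le_q hq
  set l'' : Fin (m+1) → F :=
    fun i => lineOfAux (p 0) (extend m p) (i : ℕ) + l 0 * (p 0) ^ (i : ℕ) with hl''
  have hadj'' : wengerAdj p l'' := adj_canLine p (l 0)
  have hinv'' : invf q m (.inr l'') = w := by
    rw [← (invf_adj hq hm hadj''), hp]
  have hlow : ∀ n (hn : n < q), l'' ⟨n, by omega⟩ = l ⟨n, by omega⟩ := by
    intro n
    induction n with
    | zero =>
      intro _
      show lineOfAux (p 0) (extend m p) 0 + l 0 * (p 0) ^ ((⟨0, by omega⟩ : Fin (m+1)) : ℕ)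
          = l ⟨0, by omega⟩
      rw [mk0]
      show (0 : F) + l 0 * (p 0) ^ (((0:Fin (m+1))) : ℕ) = l 0
      norm_num
    | succ k ih =>
      intro hn
      have hk : k < q - 1 := by omega
      have htr := h ⟨k, hk⟩
      rw [trunc_zero hm p] at htr
      have htr' : l ⟨k+1, by omega⟩ + p ⟨k+1, by omega⟩ = l ⟨k, by omega⟩ * p 0 := htr
      have hextp : extend m p (k+1) = p ⟨k+1, by omega⟩ := extend_eq p (by omega)
      have ihk := ih (by omega)
      have hval : l'' ⟨k+1, by omega⟩
          = (lineOfAux (p 0) (extend m p) k * p 0 - p ⟨k+1, by omega⟩)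
            + l 0 * ((p 0) ^ k * p 0) := by
        show lineOfAux (p 0) (extend m p) (k+1) + l 0 * (p 0) ^ (k+1) = _
        rw [pow_succ]
        show lineOfAux (p 0) (extend m p) k * p 0 - extend m p (k+1) + _ = _
        rw [hextp]
      have hl''k : l'' ⟨k, by omega⟩ = lineOfAux (p 0) (extend m p) k + l 0 * (p 0) ^ k := rfl
      rw [hl''k] at ihk
      rw [hval]
      linear_combination (p 0) * ihk - htr' 
  have htrunc : trunc q m hm l'' = trunc q m hm l := by
    funext i
    have hi : (i : ℕ) < q - 1 + 1 := i.isLt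
    have := hlow (i : ℕ) (by omega)
    rw [trunc_mk hm l'' hi (by omega), trunc_mk hm l hi (by omega)]
    exact this
  have : l'' = l := line_unique hq hm hinv'' hl htrunc
  rw [← this]
  exact hadj''

lemma mem_iff (hq : Fintype.card F = q) (hm : q ≤ m)
    (c : (WengerGraph F m).ConnectedComponent) (v : (Fin (m+1) → F) ⊕ (Fin (m+1) → F)) :
    (WengerGraph F m).connectedComponentMk v = c ↔ invf q m v = phi hq hm c := by
  constructor
  · intro h
    rw [← h, phi_mk]
  · intro h
    apply phi_injective hq hm
    rw [phi_mk, h]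

/-- Each connected component is isomorphic to `W_{q-1}(q)`. -/
lemma component_iso (hq : Fintype.card F = q) (hm : q ≤ m)
    (c : (WengerGraph F m).ConnectedComponent) :
    Nonempty ((WengerGraph F m).induce c.supp ≃g WengerGraph F (q - 1)) := by
  classical
  set w : Fin (m - q + 1) → F := phi hq hm c with hwdef
  set f : c.supp → (Fin (q-1+1) → F) ⊕ (Fin (q-1+1) → F) :=
    fun x => Sum.map (trunc q m hm) (trunc q m hm) x.1 with hf
  have hmem : ∀ v, v ∈ c.supp ↔ invf q m v = w := by
    intro v
    rw [SimpleGraph.ConnectedComponent.mem_supp_iff, mem_iff hq hm]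
  have hinj : Function.Injective f := by
    rintro ⟨va, hva⟩ ⟨vb, hvb⟩ hab
    rw [hmem] at hva hvb
    match va, vb with
    | Sum.inl p, Sum.inl p' =>
      have : trunc q m hm p = trunc q m hm p' := by
        have := hab
        simpa [hf, Sum.map] using this
      have := point_unique hq hm hva hvb this
      subst this; rfl
    | Sum.inr l, Sum.inr l' =>
      have : trunc q m hm l = trunc q m hm l' := by
        have := hab
        simpa [hf, Sum.map] using this
      have := line_unique hq hm hva hvb this
      subst this; rfl
    | Sum.inl p, Sum.inr l' => simp [hf, Sum.map] at hab
    | Sum.inr l, Sum.inl p' => simp [hf, Sum.map] at hab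
  have hsurj : Function.Surjective f := by
    rintro (r | r)
    · obtain ⟨p, hpw, hpt⟩ := point_exists hq hm w r
      refine ⟨⟨Sum.inl p, (hmem _).2 hpw⟩, ?_⟩
      simp [hf, Sum.map, hpt]
    · obtain ⟨l, hlw, hlt⟩ := line_exists hq hm w r
      refine ⟨⟨Sum.inr l, (hmem _).2 hlw⟩, ?_⟩
      simp [hf, Sum.map, hlt]
  refine ⟨⟨Equiv.ofBijective f ⟨hinj, hsurj⟩, ?_⟩⟩
  rintro ⟨va, hva⟩ ⟨vb, hvb⟩
  have hva' : invf q m va = w := (hmem va).1 hva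
  have hvb' : invf q m vb = w := (hmem vb).1 hvb
  have hindu : ((WengerGraph F m).induce c.supp).Adj ⟨va, hva⟩ ⟨vb, hvb⟩
      ↔ (WengerGraph F m).Adj va vb := by simp
  show (WengerGraph F (q-1)).Adj (f ⟨va, hva⟩) (f ⟨vb, hvb⟩)
      ↔ ((WengerGraph F m).induce c.supp).Adj ⟨va, hva⟩ ⟨vb, hvb⟩
  have hfv : ∀ (v) (h : v ∈ c.supp),
      f ⟨v, h⟩ = Sum.map (trunc q m hm) (trunc q m hm) v := fun _ _ => rfl
  rw [hindu, hfv va hva, hfv vb hvb]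
  clear hindu hfv hva hvb
  rcases va with p | l <;> rcases vb with p' | l'
  · constructor
    · intro h; exact absurd h (by simp [WengerGraph])
    · intro h; exact absurd h (by simp [WengerGraph])
  · constructor
    · intro h
      exact (adj_of_trunc hq hm hva' hvb' (h : wengerAdj (trunc q m hm p) (trunc q m hm l'))
        : wengerAdj p l')
    · intro h
      exact (trunc_adj hq hm (h : wengerAdj p l')
        : wengerAdj (trunc q m hm p) (trunc q m hm l'))
  · constructor
    · intro h
      exact (adj_of_trunc hq hm hvb' hva' (h : wengerAdj (trunc q m hm p') (trunc q m hm l))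
        : wengerAdj p' l)
    · intro h
      exact (trunc_adj hq hm (h : wengerAdj p' l)
        : wengerAdj (trunc q m hm p') (trunc q m hm l))
  · constructor
    · intro h; exact absurd h (by simp [WengerGraph])
    · intro h; exact absurd h (by simp [WengerGraph])

end Part3

end WengerAux

/-- For a prime power `q` and `m ≥ q`, the Wenger graph `W_m(q)` has
exactly `q^{m−q+1}` connected components, each of which (as an induced subgraph) is
isomorphic to `W_{q−1}(q)`. -/
theorem wenger_components (q m : ℕ) (F : Type) [Field F] [Fintype F]
    (hq : Fintype.card F = q) (hm : q ≤ m) :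
    Nat.card (WengerGraph F m).ConnectedComponent = q ^ (m - q + 1) ∧
    ∀ c : (WengerGraph F m).ConnectedComponent,
      Nonempty ((WengerGraph F m).induce c.supp ≃g WengerGraph F (q - 1)) :=
  ⟨WengerAux.card_components hq hm, fun c => WengerAux.component_iso hq hm c⟩
end
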